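/- For a two-layer stack with parameters (a, c) and (b, d), the expression ((((a−2c)/a + (b−2d)/b)/2)·H_a + 2H_c − H_a), where H_a = (((1/a)+(1/b))/2)^{-1} and H_c = (((1/c)+(1/d))/2)^{-1}, equals zero if and only if (c − d)(bc − ad) = 0, for all positive a, b, c, d. -/
import Mathlib


/-- The algebraic identity underlying `δ = 0 ⟺ (c−d)(bc−ad) = 0` for a two-layer
Backus average. -/
theorem delta_identity :
    ∀ a b c d : ℝ, 0 < a → 0 < b → 0 < c → 0 < d →
      ((((a - 2 * c) / a + (b - 2 * d) / b) / 2) * ((1 / a + 1 / b) / 2)⁻¹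
          + 2 * ((1 / c + 1 / d) / 2)⁻¹ - ((1 / a + 1 / b) / 2)⁻¹ = 0
        ↔ (c - d) * (b * c - a * d) = 0) := by
  intro a b c d ha hb hc hd
  have ha' := ha.ne'
  have hb' := hb.ne'
  have hc' := hc.ne'
  have hd' := hd.ne'
  have hab : a + b ≠ 0 := by positivity
  have hcd : c + d ≠ 0 := by positivity
  have key : (((a - 2 * c) / a + (b - 2 * d) / b) / 2) * ((1 / a + 1 / b) / 2)⁻¹
          + 2 * ((1 / c + 1 / d) / 2)⁻¹ - ((1 / a + 1 / b) / 2)⁻¹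
        = -2 * ((c - d) * (b * c - a * d)) / ((a + b) * (c + d)) := by
    field_simp
    ring
  rw [key, div_eq_zero_iff]
  constructor
  · rintro (h | h)
    · linarith [mul_eq_zero.mp (by linarith : (2:ℝ) * ((c - d) * (b * c - a * d)) = 0)]
    · exact absurd h (by positivity)
  · intro h
    left
    rw [h]; ring
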